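/- If f : [1, ∞) → (0, ∞) is differentiable and satisfies f'(r) = (c/r^{α+1})·f(r)² for all r ≥ 1, where c, α > 0, and f(r)·r^{−α} → L > 0 as r → ∞, then L = α/c, i.e. f(r) ∼ (α/c)·r^α as r → ∞. -/

import Mathlib

open Filter

theorem susceptibility_ode_limit
    (c α L : ℝ) (hc : 0 < c) (hα : 0 < α) (hL : 0 < L)
    (f : ℝ → ℝ)
    (hpos : ∀ r : ℝ, 1 ≤ r → 0 < f r)
    (hderiv : ∀ r : ℝ, 1 ≤ r → HasDerivAt f (c / r ^ (α + 1) * (f r) ^ 2) r)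
    (hlim : Tendsto (fun r : ℝ => f r * r ^ (-α)) atTop (nhds L)) :
    L = α / c := by
  set g : ℝ → ℝ := fun r => (f r)⁻¹ - (c / α) * r ^ (-α) with hg_def
  have hg : ∀ r : ℝ, 1 ≤ r → HasDerivAt g 0 r := by
    intro r hr
    have hr0 : (0:ℝ) < r := lt_of_lt_of_le one_pos hr
    have h1 : HasDerivAt (fun x => (f x)⁻¹)
        (-(c / r ^ (α + 1) * (f r) ^ 2) / (f r) ^ 2) r :=
      (hderiv r hr).inv (hpos r hr).ne'
    have h2 : HasDerivAt (fun x : ℝ => x ^ (-α)) ((-α) * r ^ (-α - 1)) r :=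
      Real.hasDerivAt_rpow_const (Or.inl hr0.ne')
    have h3 : HasDerivAt (fun x => (f x)⁻¹ - c / α * x ^ (-α))
        (-(c / r ^ (α + 1) * (f r) ^ 2) / (f r) ^ 2 - c / α * ((-α) * r ^ (-α - 1))) r :=
      h1.sub ((h2.const_mul (c / α)))
    convert h3 using 1
    have hfne : (f r) ^ 2 ≠ 0 := pow_ne_zero 2 (hpos r hr).ne'
    have hrp : r ^ (-α - 1) = (r ^ (α + 1))⁻¹ := by
      rw [show -α - 1 = -(α + 1) by ring, Real.rpow_neg hr0.le]
    rw [hrp]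
    field_simp [(hpos r hr).ne']
    ring
  have hconst : ∀ r : ℝ, 1 ≤ r → g r = g 1 := by
    intro r hr
    have key := constant_of_has_deriv_right_zero
      (f := g) (a := 1) (b := r)
      (fun x hx => (hg x hx.1).continuousAt.continuousWithinAt)
      (fun x hx => (hg x hx.1).hasDerivWithinAt)
    exact key r ⟨hr, le_refl r⟩
  set K : ℝ := g 1 with hK_def
  have hinv : ∀ r : ℝ, 1 ≤ r → (f r)⁻¹ = K + (c / α) * r ^ (-α) := by
    intro r hr
    have := hconst r hr
    simp only [hg_def] at this
    linarith [this]
  have hfr : ∀ r : ℝ, 1 ≤ r → f r * r ^ (-α) = r ^ (-α) / (K + (c / α) * r ^ (-α)) := by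
    intro r hr
    have h := hinv r hr
    have hfpos := hpos r hr
    have : f r = (K + (c / α) * r ^ (-α))⁻¹ := by
      rw [← h, inv_inv]
    rw [this]; ring
  have hK0 : K = 0 := by
    by_contra hKne
    have htop : Tendsto (fun r : ℝ => r ^ (-α)) atTop (nhds 0) :=
      tendsto_rpow_neg_atTop hα
    have hden : Tendsto (fun r : ℝ => K + (c / α) * r ^ (-α)) atTop (nhds K) := by
      have := (htop.const_mul (c / α)).const_add K
      simpa using this
    have hquot : Tendsto (fun r : ℝ => r ^ (-α) / (K + (c / α) * r ^ (-α)))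
        atTop (nhds 0) := by
      have := htop.div hden hKne
      simpa only [zero_div, Pi.div_def] using this
    have hlim0 : Tendsto (fun r : ℝ => f r * r ^ (-α)) atTop (nhds 0) := by
      refine hquot.congr' ?_
      filter_upwards [eventually_ge_atTop (1:ℝ)] with r hr
      exact (hfr r hr).symm
    have := tendsto_nhds_unique hlim hlim0
    exact absurd this hL.ne'
  have heq : ∀ r : ℝ, 1 ≤ r → f r * r ^ (-α) = α / c := by
    intro r hr
    have hr0 : (0:ℝ) < r := lt_of_lt_of_le one_pos hr
    have hrne : r ^ (-α) ≠ 0 := (Real.rpow_pos_of_pos hr0 _).ne'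
    rw [hfr r hr, hK0, zero_add]
    rw [div_eq_iff (by positivity : (c / α) * r ^ (-α) ≠ 0)]
    field_simp
  have hconst_lim : Tendsto (fun r : ℝ => f r * r ^ (-α)) atTop (nhds (α / c)) := by
    refine tendsto_const_nhds.congr' ?_
    filter_upwards [eventually_ge_atTop (1:ℝ)] with r hr
    exact (heq r hr).symm
  exact tendsto_nhds_unique hlim hconst_lim
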